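/- arXiv:1801.07209 — 2 statements merged into one kernel-verified Lean document; each statement's English description precedes it below -/
import Mathlib

section
/- Let $Z$ be exponentially distributed with mean $\mu > 0$ and let $p_p, N_0 > 0$. Then $\mathbb{E}[\ln(p_p Z + N_0)] = \ln(N_0) - \exp\left(\frac{N_0}{p_p \mu}\right)\mathrm{Ei}\left(-\frac{N_0}{p_p \mu}\right)$, where $\mathrm{Ei}$ denotes the exponential integral function. -/
open MeasureTheory ProbabilityTheory Real

/-- The exponential integral function `Ei x = -∫_{-x}^∞ e^{-t}/t dt` (for `x < 0`). -/
noncomputable def expIntegralEi (x : ℝ) : ℝ := -∫ t in Set.Ioi (-x), Real.exp (-t) / t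

open Set Filter Topology
open scoped ENNReal NNReal

section Aux

variable {r pp N0 : ℝ}

lemma aux_abs_log_le (hpp : 0 < pp) (hN0 : 0 < N0) {z : ℝ} (hz : 0 ≤ z) :
    |Real.log (pp * z + N0)| ≤ |Real.log N0| + (pp / N0) * z := by
  have hx : (0:ℝ) < pp * z + N0 := by positivity
  have h1 : Real.log N0 ≤ Real.log (pp * z + N0) := by
    apply Real.log_le_log hN0; nlinarith
  have h2 : Real.log (pp * z + N0) - Real.log N0 ≤ (pp / N0) * z := by
    rw [← Real.log_div (ne_of_gt hx) (ne_of_gt hN0)]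
    have := Real.log_le_sub_one_of_pos (show (0:ℝ) < (pp * z + N0) / N0 by positivity)
    have : Real.log ((pp * z + N0) / N0) ≤ (pp * z + N0) / N0 - 1 := this
    have heq : (pp * z + N0) / N0 - 1 = (pp / N0) * z := by field_simp; ring
    linarith [heq ▸ this]
  rw [abs_le]
  constructor
  · have : -|Real.log N0| ≤ Real.log N0 := neg_abs_le _
    nlinarith [mul_nonneg (le_of_lt (div_pos hpp hN0)) hz]
  · have : Real.log N0 ≤ |Real.log N0| := le_abs_self _
    linarith

lemma aux_integrable_exp (hr : 0 < r) :
    IntegrableOn (fun z : ℝ => Real.exp (-(r * z))) (Ioi 0) := by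
  simpa [neg_mul] using exp_neg_integrableOn_Ioi 0 hr

lemma aux_integrable_mul_exp (hr : 0 < r) :
    IntegrableOn (fun z : ℝ => z * Real.exp (-(r * z))) (Ioi 0) := by
  have := integrableOn_rpow_mul_exp_neg_mul_rpow (p := 1) (s := 1) (b := r)
    (by norm_num) zero_lt_one hr
  refine this.congr_fun (fun x hx => ?_) measurableSet_Ioi
  simp [Real.rpow_one, neg_mul]

lemma aux_integrable_log (hr : 0 < r) (hpp : 0 < pp) (hN0 : 0 < N0) :
    IntegrableOn (fun z : ℝ => Real.exp (-(r * z)) * Real.log (pp * z + N0)) (Ioi 0) := by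
  have hmeas : Measurable fun z : ℝ => Real.exp (-(r * z)) * Real.log (pp * z + N0) :=
    ((measurable_id.const_mul r).neg.exp).mul
      (((measurable_id.const_mul pp).add_const N0).log)
  refine Integrable.mono'
    (((aux_integrable_exp hr).const_mul (|Real.log N0|)).add
      ((aux_integrable_mul_exp hr).const_mul (pp / N0)))
    hmeas.aestronglyMeasurable ?_
  filter_upwards [ae_restrict_mem measurableSet_Ioi] with z hz
  have hz0 : (0:ℝ) ≤ z := le_of_lt hz
  have hexp : (0:ℝ) < Real.exp (-(r * z)) := Real.exp_pos _
  simp only [Pi.add_apply]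
  rw [Real.norm_eq_abs, abs_mul, abs_of_pos hexp]
  calc Real.exp (-(r * z)) * |Real.log (pp * z + N0)|
      ≤ Real.exp (-(r * z)) * (|Real.log N0| + (pp / N0) * z) := by
        exact mul_le_mul_of_nonneg_left (aux_abs_log_le hpp hN0 hz0) (le_of_lt hexp)
    _ = |Real.log N0| * Real.exp (-(r * z)) + pp / N0 * (z * Real.exp (-(r * z))) := by ring

lemma aux_integrable_frac (hr : 0 < r) (hpp : 0 < pp) (hN0 : 0 < N0) :
    IntegrableOn (fun z : ℝ => Real.exp (-(r * z)) * (pp / (pp * z + N0))) (Ioi 0) := by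
  have hmeas : Measurable fun z : ℝ => Real.exp (-(r * z)) * (pp / (pp * z + N0)) :=
    ((measurable_id.const_mul r).neg.exp).mul
      (measurable_const.div ((measurable_id.const_mul pp).add_const N0))
  refine Integrable.mono' ((aux_integrable_exp hr).const_mul (pp / N0))
    hmeas.aestronglyMeasurable ?_
  filter_upwards [ae_restrict_mem measurableSet_Ioi] with z hz
  have hz0 : (0:ℝ) ≤ z := le_of_lt hz
  have hx : (0:ℝ) < pp * z + N0 := by positivity
  have hexp : (0:ℝ) < Real.exp (-(r * z)) := Real.exp_pos _
  have hfrac : pp / (pp * z + N0) ≤ pp / N0 := by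
    apply div_le_div_of_nonneg_left (le_of_lt hpp) hN0; nlinarith
  have hfrac0 : (0:ℝ) ≤ pp / (pp * z + N0) := by positivity
  rw [Real.norm_eq_abs, abs_mul, abs_of_pos hexp, abs_of_nonneg hfrac0, mul_comm (pp / N0)]
  exact mul_le_mul_of_nonneg_left hfrac (le_of_lt hexp)

lemma aux_hasDerivAt (hpp : 0 < pp) (hN0 : 0 < N0) {z : ℝ} (hz : 0 ≤ z) :
    HasDerivAt (fun z : ℝ => -(Real.exp (-(r * z)) * Real.log (pp * z + N0)))
      (r * (Real.exp (-(r * z)) * Real.log (pp * z + N0))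
        - Real.exp (-(r * z)) * (pp / (pp * z + N0))) z := by
  have hx : (0:ℝ) < pp * z + N0 := by positivity
  have h1 : HasDerivAt (fun z : ℝ => Real.exp (-(r * z))) (-r * Real.exp (-(r * z))) z := by
    have := ((hasDerivAt_id z).const_mul r).neg.exp
    simpa [mul_comm] using this
  have h2 : HasDerivAt (fun z : ℝ => Real.log (pp * z + N0)) (pp / (pp * z + N0)) z := by
    have := (((hasDerivAt_id z).const_mul pp).add_const N0).log (ne_of_gt hx)
    simpa using this
  have := (h1.mul h2).neg
  exact this.congr_deriv (by ring)

lemma aux_tendsto (hr : 0 < r) (hpp : 0 < pp) (hN0 : 0 < N0) :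
    Tendsto (fun z : ℝ => -(Real.exp (-(r * z)) * Real.log (pp * z + N0))) atTop (𝓝 0) := by
  rw [← neg_zero]
  refine Tendsto.neg ?_
  have hbound : Tendsto
      (fun z : ℝ => |Real.log N0| * Real.exp (-(r * z)) + pp / N0 / r * ((r * z) * Real.exp (-(r * z))))
      atTop (𝓝 0) := by
    have t1 : Tendsto (fun z : ℝ => Real.exp (-(r * z))) atTop (𝓝 0) := by
      have : Tendsto (fun z : ℝ => r * z) atTop atTop :=
        Tendsto.const_mul_atTop hr tendsto_id
      exact (Real.tendsto_exp_neg_atTop_nhds_zero).comp this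
    have t2 : Tendsto (fun z : ℝ => (r * z) * Real.exp (-(r * z))) atTop (𝓝 0) := by
      have hrz : Tendsto (fun z : ℝ => r * z) atTop atTop :=
        Tendsto.const_mul_atTop hr tendsto_id
      have := (tendsto_pow_mul_exp_neg_atTop_nhds_zero 1).comp hrz
      simpa [Function.comp_def] using this
    have := (t1.const_mul (|Real.log N0|)).add (t2.const_mul (pp / N0 / r))
    simpa using this
  refine squeeze_zero_norm' ?_ hbound
  filter_upwards [eventually_ge_atTop (0:ℝ)] with z hz
  have hexp : (0:ℝ) < Real.exp (-(r * z)) := Real.exp_pos _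
  have hr' : r ≠ 0 := ne_of_gt hr
  rw [Real.norm_eq_abs, abs_mul, abs_of_pos hexp]
  calc Real.exp (-(r * z)) * |Real.log (pp * z + N0)|
      ≤ Real.exp (-(r * z)) * (|Real.log N0| + (pp / N0) * z) :=
        mul_le_mul_of_nonneg_left (aux_abs_log_le hpp hN0 hz) (le_of_lt hexp)
    _ = |Real.log N0| * Real.exp (-(r * z))
          + pp / N0 / r * ((r * z) * Real.exp (-(r * z))) := by
        field_simp

end Aux

/-- For `Z` exponential with mean `μ` and constants `pp, N0 > 0`,
`𝔼[ln(pp Z + N0)] = ln N0 - e^{N0/(pp μ)} Ei(-N0/(pp μ))`. -/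
theorem stmt_6 {Ω : Type*} [MeasureSpace Ω] [IsProbabilityMeasure (ℙ : Measure Ω)]
    (Z : Ω → ℝ) (μ pp N0 : ℝ) (hμ : 0 < μ) (hpp : 0 < pp) (hN0 : 0 < N0)
    (hZd : Measure.map Z ℙ = expMeasure (1 / μ)) :
    ∫ ω, Real.log (pp * Z ω + N0) ∂ℙ
      = Real.log N0
        - Real.exp (N0 / (pp * μ)) * expIntegralEi (-(N0 / (pp * μ))) := by
  set r : ℝ := 1 / μ with hr_def
  have hr : 0 < r := by positivity
  set a : ℝ := N0 / (pp * μ) with ha_def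
  have ha : 0 < a := by positivity
  -- measurability of Z
  have hprob : IsProbabilityMeasure (expMeasure r) := isProbabilityMeasure_expMeasure hr
  have hZae : AEMeasurable Z ℙ := by
    by_contra h
    rw [Measure.map_of_not_aemeasurable h] at hZd
    have h1 := hprob.measure_univ
    rw [← hZd] at h1
    simp at h1
  have hlogmeas : Measurable fun z : ℝ => Real.log (pp * z + N0) :=
    ((measurable_id.const_mul pp).add_const N0).log
  -- transport to ℝ
  have step1 : ∫ ω, Real.log (pp * Z ω + N0) ∂ℙ
      = ∫ z, Real.log (pp * z + N0) ∂(expMeasure r) := by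
    rw [← hZd]
    exact (integral_map hZae hlogmeas.aestronglyMeasurable).symm
  -- unfold density
  have hpdf_eq : ∀ x : ℝ, exponentialPDFReal r x
      = if 0 ≤ x then r * Real.exp (-(r * x)) else 0 := by
    intro x
    rw [exponentialPDFReal, gammaPDFReal]
    simp only [Real.rpow_one, Real.Gamma_one, div_one, sub_self, Real.rpow_zero, mul_one]
  have step2 : ∫ z, Real.log (pp * z + N0) ∂(expMeasure r)
      = ∫ z in Ioi (0:ℝ), r * (Real.exp (-(r * z)) * Real.log (pp * z + N0)) := by
    have hdm : expMeasure r
        = volume.withDensity fun x => ((exponentialPDFReal r x).toNNReal : ℝ≥0∞) := by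
      rfl
    rw [hdm, integral_withDensity_eq_integral_smul
      ((measurable_exponentialPDFReal r).real_toNNReal) _]
    have hptwise : (fun z : ℝ => (exponentialPDFReal r z).toNNReal • Real.log (pp * z + N0))
        = (Ici (0:ℝ)).indicator fun z => r * (Real.exp (-(r * z)) * Real.log (pp * z + N0)) := by
      funext z
      rw [NNReal.smul_def, Real.coe_toNNReal _ (exponentialPDFReal_nonneg hr z), smul_eq_mul]
      by_cases h : 0 ≤ z
      · rw [Set.indicator_of_mem (by exact h)]
        rw [hpdf_eq z, if_pos h]; ring
      · rw [Set.indicator_of_notMem (by exact h)]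
        rw [hpdf_eq z, if_neg h, zero_mul]
    rw [hptwise, integral_indicator measurableSet_Ici, integral_Ici_eq_integral_Ioi]
  -- integration by parts
  have hparts : ∫ z in Ioi (0:ℝ),
      (r * (Real.exp (-(r * z)) * Real.log (pp * z + N0))
        - Real.exp (-(r * z)) * (pp / (pp * z + N0))) = Real.log N0 := by
    have := integral_Ioi_of_hasDerivAt_of_tendsto' (a := 0)
      (f := fun z : ℝ => -(Real.exp (-(r * z)) * Real.log (pp * z + N0)))
      (f' := fun z : ℝ => r * (Real.exp (-(r * z)) * Real.log (pp * z + N0))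
        - Real.exp (-(r * z)) * (pp / (pp * z + N0)))
      (fun x hx => aux_hasDerivAt hpp hN0 hx)
      (((aux_integrable_log hr hpp hN0).const_mul r).sub (aux_integrable_frac hr hpp hN0))
      (aux_tendsto hr hpp hN0)
    rw [this]; simp
  have hint1 : IntegrableOn
      (fun z : ℝ => r * (Real.exp (-(r * z)) * Real.log (pp * z + N0))) (Ioi 0) :=
    (aux_integrable_log hr hpp hN0).const_mul r
  have hint2 := aux_integrable_frac hr hpp hN0 (r := r)
  have step3 : ∫ z in Ioi (0:ℝ), r * (Real.exp (-(r * z)) * Real.log (pp * z + N0))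
      = Real.log N0 + ∫ z in Ioi (0:ℝ), Real.exp (-(r * z)) * (pp / (pp * z + N0)) := by
    rw [integral_sub hint1 hint2] at hparts
    linarith
  -- change of variables
  have hsub : ∫ z in Ioi (0:ℝ), Real.exp (-(r * z)) * (pp / (pp * z + N0))
      = Real.exp a * ∫ t in Ioi a, Real.exp (-t) / t := by
    have hptwise : ∀ z : ℝ,
        Real.exp (-(r * z)) * (pp / (pp * z + N0))
          = (Real.exp a * r) * (Real.exp (-(r * z + a)) / (r * z + a)) := by
      intro z
      have h1 : pp * z + N0 = pp * μ * (r * z + a) := by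
        rw [hr_def, ha_def]
        field_simp
      have h2 : pp / (pp * z + N0) = r / (r * z + a) := by
        rw [h1]
        rcases eq_or_ne (r * z + a) 0 with h | h
        · rw [h, mul_zero, div_zero, div_zero]
        · rw [div_eq_div_iff (mul_ne_zero (by positivity : (pp * μ : ℝ) ≠ 0) h) h, hr_def]
          field_simp
      rw [h2, show (-(r * z + a) : ℝ) = -a + -(r * z) by ring, Real.exp_add]
      have h3 : Real.exp a * Real.exp (-a) = 1 := by
        rw [← Real.exp_add]; simp
      calc Real.exp (-(r * z)) * (r / (r * z + a))
          = (Real.exp a * Real.exp (-a)) * (Real.exp (-(r * z)) * (r / (r * z + a))) := by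
            rw [h3, one_mul]
        _ = Real.exp a * r * (Real.exp (-a) * Real.exp (-(r * z)) / (r * z + a)) := by
            ring
    calc ∫ z in Ioi (0:ℝ), Real.exp (-(r * z)) * (pp / (pp * z + N0))
        = ∫ z in Ioi (0:ℝ), (Real.exp a * r) * (Real.exp (-(r * z + a)) / (r * z + a)) := by
          exact setIntegral_congr_fun measurableSet_Ioi fun z _ => hptwise z
      _ = (Real.exp a * r) * ∫ z in Ioi (0:ℝ), Real.exp (-(r * z + a)) / (r * z + a) := by
          rw [integral_const_mul]
      _ = (Real.exp a * r) * (r⁻¹ * ∫ u in Ioi (0:ℝ), Real.exp (-(u + a)) / (u + a)) := by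
          congr 1
          have := integral_comp_mul_left_Ioi
            (g := fun u : ℝ => Real.exp (-(u + a)) / (u + a)) 0 hr
          simpa [mul_zero, smul_eq_mul] using this
      _ = (Real.exp a * r) * (r⁻¹ * ∫ t in Ioi a, Real.exp (-t) / t) := by
          congr 1
          congr 1
          have := (measurePreserving_add_right (volume : Measure ℝ) a).setIntegral_preimage_emb
            (MeasurableEquiv.addRight a).measurableEmbedding
            (fun t => Real.exp (-t) / t) (Ioi a)
          simpa using this
      _ = Real.exp a * ∫ t in Ioi a, Real.exp (-t) / t := by
          field_simp
  -- assemble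
  rw [step1, step2, step3, hsub]
  rw [expIntegralEi, neg_neg]
  ring
end

section
/- Let $Z$ be exponential with mean $\mathbb{E}[z] > 0$, and let $a, N_0, p_p > 0$ be constants. Then $\mathbb{E}\left[\log_2\left(1 + \frac{a}{p_p Z + N_0}\right)\right] = \log_2\left(1 + \frac{a}{N_0}\right) - \frac{e^{N_0/(p_p\mathbb{E}[z])}}{\ln 2}\left[E_1\left(\frac{N_0}{p_p\mathbb{E}[z]}\right) - e^{a/(p_p\mathbb{E}[z])} E_1\left(\frac{a + N_0}{p_p\mathbb{E}[z]}\right)\right]$, where $E_1(x) = \int_x^{\infty} t^{-1}e^{-t}\,dt$ is the first-order exponential integral. -/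
open MeasureTheory ProbabilityTheory Real

/-- The first-order exponential integral `E₁(x) = ∫_x^∞ t⁻¹ e^{-t} dt`. -/
noncomputable def expIntegralE1 (x : ℝ) : ℝ := ∫ t in Set.Ioi x, t⁻¹ * Real.exp (-t)

namespace Stmt7Aux

open Set Filter Topology

/-- Translation invariance for integrals over `Ioi`. -/
lemma integral_Ioi_comp_add_right (f : ℝ → ℝ) (a d : ℝ) :
    ∫ x in Ioi a, f (x + d) = ∫ x in Ioi (a + d), f x := by
  have h := integral_add_right_eq_self (μ := (volume : Measure ℝ))
      ((Ioi (a + d)).indicator f) d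
  rw [← integral_indicator measurableSet_Ioi, ← integral_indicator measurableSet_Ioi, ← h]
  congr 1
  ext x
  by_cases hx : a < x
  · rw [Set.indicator_of_mem (show x ∈ Ioi a from hx),
      Set.indicator_of_mem (show x + d ∈ Ioi (a + d) by simpa [Set.mem_Ioi] using hx)]
  · rw [Set.indicator_of_notMem (show x ∉ Ioi a by simpa [Set.mem_Ioi] using hx),
      Set.indicator_of_notMem (show x + d ∉ Ioi (a + d) by simpa [Set.mem_Ioi] using hx)]

lemma key_ineq {r z : ℝ} (hr : 0 < r) (hz : 0 ≤ z) :
    r * z * Real.exp (-(r * z)) ≤ 2 * Real.exp (-(r / 2 * z)) := by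
  have h1 : r * z ≤ 2 * Real.exp (r / 2 * z) := by
    have := Real.add_one_le_exp (r / 2 * z)
    nlinarith
  have h2 : Real.exp (-(r * z)) = Real.exp (-(r / 2 * z)) * Real.exp (-(r / 2 * z)) := by
    rw [← Real.exp_add]; ring_nf
  have h3 : r * z * Real.exp (-(r * z)) ≤ 2 * Real.exp (r / 2 * z) * Real.exp (-(r * z)) :=
    mul_le_mul_of_nonneg_right h1 (Real.exp_pos _).le
  calc r * z * Real.exp (-(r * z)) ≤ 2 * Real.exp (r / 2 * z) * Real.exp (-(r * z)) := h3
    _ = 2 * (Real.exp (r / 2 * z) * Real.exp (-(r * z))) := by ring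
    _ = 2 * Real.exp (-(r / 2 * z)) := by rw [← Real.exp_add]; ring_nf

lemma log_diff_nonneg {p c z : ℝ} (hp : 0 < p) (hc : 0 < c) (hz : 0 ≤ z) :
    0 ≤ Real.log (c + p * z) - Real.log c := by
  have : Real.log c ≤ Real.log (c + p * z) :=
    Real.log_le_log hc (by nlinarith)
  linarith

lemma log_diff_le {p c z : ℝ} (hp : 0 < p) (hc : 0 < c) (hz : 0 ≤ z) :
    Real.log (c + p * z) - Real.log c ≤ p * z / c := by
  rw [← Real.log_div (by positivity) hc.ne']
  have h := Real.log_le_sub_one_of_pos (show 0 < (c + p * z) / c by positivity)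
  calc Real.log ((c + p * z) / c) ≤ (c + p * z) / c - 1 := h
    _ = p * z / c := by field_simp; ring

lemma intOn1 {r p c : ℝ} (hr : 0 < r) (hp : 0 < p) (hc : 0 < c) :
    IntegrableOn (fun z => Real.exp (-(r * z)) * (p * (c + p * z)⁻¹)) (Ioi 0) := by
  have hg : IntegrableOn (fun z => p / c * Real.exp (-(r * z))) (Ioi 0) := by
    simpa [neg_mul, IntegrableOn] using (exp_neg_integrableOn_Ioi 0 hr).const_mul (p / c)
  refine hg.mono' ?_ ?_
  · exact (((Real.measurable_exp.comp ((measurable_id.const_mul r).neg)).mul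
      ((measurable_const.mul (((measurable_id.const_mul p).const_add c).inv))))).aestronglyMeasurable
  · filter_upwards [ae_restrict_mem measurableSet_Ioi] with z hz
    have hz0 : (0:ℝ) < z := hz
    have hd : 0 < c + p * z := by nlinarith
    have h1 : (c + p * z)⁻¹ ≤ c⁻¹ := by
      apply inv_anti₀ hc; nlinarith
    rw [Real.norm_eq_abs, abs_of_nonneg (by positivity)]
    calc Real.exp (-(r * z)) * (p * (c + p * z)⁻¹)
        ≤ Real.exp (-(r * z)) * (p * c⁻¹) := by gcongr
      _ = p / c * Real.exp (-(r * z)) := by ring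

lemma intOn2 {r p c : ℝ} (hr : 0 < r) (hp : 0 < p) (hc : 0 < c) :
    IntegrableOn (fun z => r * Real.exp (-(r * z)) * (Real.log (c + p * z) - Real.log c))
      (Ioi 0) := by
  have hg : IntegrableOn (fun z => 2 * p / c * Real.exp (-(r / 2 * z))) (Ioi 0) := by
    simpa [neg_mul, IntegrableOn] using (exp_neg_integrableOn_Ioi 0 (half_pos hr)).const_mul (2 * p / c)
  refine hg.mono' ?_ ?_
  · exact ((measurable_const.mul
      (Real.measurable_exp.comp ((measurable_id.const_mul r).neg))).mul
      ((Real.measurable_log.comp ((measurable_id.const_mul p).const_add c)).sub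
        measurable_const)).aestronglyMeasurable
  · filter_upwards [ae_restrict_mem measurableSet_Ioi] with z hz
    have hz0 : (0:ℝ) < z := hz
    have hL0 := log_diff_nonneg hp hc hz0.le
    have hL1 := log_diff_le hp hc hz0.le
    have hkey := key_ineq hr hz0.le
    rw [Real.norm_eq_abs, abs_of_nonneg (by positivity)]
    calc r * Real.exp (-(r * z)) * (Real.log (c + p * z) - Real.log c)
        ≤ r * Real.exp (-(r * z)) * (p * z / c) := by gcongr
      _ = p / c * (r * z * Real.exp (-(r * z))) := by ring
      _ ≤ p / c * (2 * Real.exp (-(r / 2 * z))) := by gcongr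
      _ = 2 * p / c * Real.exp (-(r / 2 * z)) := by ring

lemma tendsto0 {r p c : ℝ} (hr : 0 < r) (hp : 0 < p) (hc : 0 < c) :
    Filter.Tendsto (fun z => Real.exp (-(r * z)) * (Real.log (c + p * z) - Real.log c))
      Filter.atTop (𝓝 0) := by
  apply squeeze_zero' (g := fun z => 2 * p / (r * c) * Real.exp (-(r / 2 * z)))
  · filter_upwards [Filter.eventually_ge_atTop (0:ℝ)] with z hz
    have := log_diff_nonneg hp hc hz
    positivity
  · filter_upwards [Filter.eventually_ge_atTop (0:ℝ)] with z hz
    have hL1 := log_diff_le hp hc hz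
    have hL0 := log_diff_nonneg hp hc hz
    have hkey := key_ineq hr hz
    calc Real.exp (-(r * z)) * (Real.log (c + p * z) - Real.log c)
        ≤ Real.exp (-(r * z)) * (p * z / c) := by gcongr
      _ = p / (r * c) * (r * z * Real.exp (-(r * z))) := by field_simp
      _ ≤ p / (r * c) * (2 * Real.exp (-(r / 2 * z))) := by gcongr
      _ = 2 * p / (r * c) * Real.exp (-(r / 2 * z)) := by ring
  · have h1 : Filter.Tendsto (fun z : ℝ => r / 2 * z) Filter.atTop Filter.atTop :=
      Filter.Tendsto.const_mul_atTop (half_pos hr) Filter.tendsto_id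
    have h2 := (Real.tendsto_exp_neg_atTop_nhds_zero.comp h1).const_mul (2 * p / (r * c))
    simpa using h2

/-- Integration by parts step. -/
lemma ibp {r p c : ℝ} (hr : 0 < r) (hp : 0 < p) (hc : 0 < c) :
    ∫ z in Ioi (0:ℝ), r * Real.exp (-(r * z)) * (Real.log (c + p * z) - Real.log c)
      = ∫ z in Ioi (0:ℝ), Real.exp (-(r * z)) * (p * (c + p * z)⁻¹) := by
  set F : ℝ → ℝ := fun z => -(Real.exp (-(r * z)) * (Real.log (c + p * z) - Real.log c)) with hF
  set F' : ℝ → ℝ := fun z => r * Real.exp (-(r * z)) * (Real.log (c + p * z) - Real.log c)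
      - Real.exp (-(r * z)) * (p * (c + p * z)⁻¹) with hF'
  have hderiv : ∀ x ∈ Ici (0:ℝ), HasDerivAt F (F' x) x := by
    intro x hx
    have hx0 : (0:ℝ) ≤ x := hx
    have hd : 0 < c + p * x := by nlinarith
    have h1 : HasDerivAt (fun z : ℝ => -(r * z)) (-r) x := by
      simpa using (hasDerivAt_id x).const_mul (-r)
    have hexp : HasDerivAt (fun z : ℝ => Real.exp (-(r * z)))
        (Real.exp (-(r * x)) * (-r)) x := h1.exp
    have hlin : HasDerivAt (fun z : ℝ => c + p * z) p x := by
      simpa using ((hasDerivAt_id x).const_mul p).const_add c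
    have hlog : HasDerivAt (fun z : ℝ => Real.log (c + p * z)) (p / (c + p * x)) x :=
      hlin.log hd.ne'
    have hsub : HasDerivAt (fun z : ℝ => Real.log (c + p * z) - Real.log c)
        (p / (c + p * x)) x := hlog.sub_const _
    have hmul : HasDerivAt (fun z => -(Real.exp (-(r * z)) * (Real.log (c + p * z) - Real.log c)))
        (-(Real.exp (-(r * x)) * -r * (Real.log (c + p * x) - Real.log c) + Real.exp (-(r * x)) * (p / (c + p * x)))) x :=
      (hexp.mul hsub).neg
    convert hmul using 1
    rw [hF']
    field_simp
    ring
  have hint : IntegrableOn F' (Ioi 0) := (intOn2 hr hp hc).sub (intOn1 hr hp hc)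
  have htend : Filter.Tendsto F Filter.atTop (𝓝 0) := by
    have := (tendsto0 hr hp hc).neg
    simpa [hF] using this
  have hftc := integral_Ioi_of_hasDerivAt_of_tendsto' hderiv hint htend
  have hF0 : F 0 = 0 := by simp [hF]
  rw [hF0, sub_zero] at hftc
  have hsplit := integral_sub (intOn2 hr hp hc) (intOn1 hr hp hc)
  rw [hF'] at hftc
  rw [hftc] at hsplit
  linarith [hsplit]

/-- Change of variables step. -/
lemma expE1_eq {r p c : ℝ} (hr : 0 < r) (hp : 0 < p) (hc : 0 < c) :
    ∫ z in Ioi (0:ℝ), Real.exp (-(r * z)) * (p * (c + p * z)⁻¹)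
      = Real.exp (r * c / p) * expIntegralE1 (r * c / p) := by
  set s := r * c / p with hs
  have hs0 : 0 < s := by positivity
  have h1 : expIntegralE1 s = ∫ u in Ioi (0:ℝ), (u + s)⁻¹ * Real.exp (-(u + s)) := by
    have h := integral_Ioi_comp_add_right (fun t => t⁻¹ * Real.exp (-t)) 0 s
    rw [zero_add] at h
    exact h.symm
  have h2 := integral_comp_mul_left_Ioi (fun u => (u + s)⁻¹ * Real.exp (-(u + s))) 0 hr
  rw [mul_zero] at h2
  simp only [smul_eq_mul] at h2
  have h3 : expIntegralE1 s
      = r * ∫ z in Ioi (0:ℝ), (r * z + s)⁻¹ * Real.exp (-(r * z + s)) := by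
    rw [h1, h2, ← mul_assoc, mul_inv_cancel₀ hr.ne', one_mul]
  have h4 : ∫ z in Ioi (0:ℝ), Real.exp (-(r * z)) * (p * (c + p * z)⁻¹)
      = ∫ z in Ioi (0:ℝ), Real.exp s * (r * ((r * z + s)⁻¹ * Real.exp (-(r * z + s)))) := by
    apply setIntegral_congr_fun measurableSet_Ioi
    intro z hz
    dsimp only
    have hz0 : (0:ℝ) < z := hz
    have hd1 : 0 < c + p * z := by nlinarith
    have hd2 : 0 < r * z + s := by positivity
    have he : Real.exp (-(r * z + s)) = Real.exp (-(r * z)) * Real.exp (-s) := by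
      rw [← Real.exp_add]; ring_nf
    have hrs : r * (r * z + s)⁻¹ = p * (c + p * z)⁻¹ := by
      have h5 : r * z + s = r * (c + p * z) / p := by rw [hs]; field_simp; ring
      rw [h5]
      rw [show (r * (c + p * z) / p)⁻¹ = p / (r * (c + p * z)) from by
        rw [inv_div]]
      field_simp
    rw [he]
    have hes : Real.exp s * Real.exp (-s) = 1 := by
      rw [← Real.exp_add, add_neg_cancel, Real.exp_zero]
    calc Real.exp (-(r * z)) * (p * (c + p * z)⁻¹)
        = Real.exp (-(r * z)) * (r * (r * z + s)⁻¹) := by rw [hrs]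
      _ = Real.exp s * (r * ((r * z + s)⁻¹ * (Real.exp (-(r * z)) * Real.exp (-s)))) := by
          rw [show Real.exp s * (r * ((r * z + s)⁻¹ * (Real.exp (-(r * z)) * Real.exp (-s))))
              = (Real.exp s * Real.exp (-s)) * (Real.exp (-(r * z)) * (r * (r * z + s)⁻¹))
              from by ring, hes, one_mul]
  rw [h4, integral_const_mul, integral_const_mul, ← h3]

/-- Main per-log integral. -/
lemma log_integral {r p c : ℝ} (hr : 0 < r) (hp : 0 < p) (hc : 0 < c) :
    ∫ z in Ioi (0:ℝ), r * Real.exp (-(r * z)) * (Real.log (c + p * z) - Real.log c)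
      = Real.exp (r * c / p) * expIntegralE1 (r * c / p) :=
  (ibp hr hp hc).trans (expE1_eq hr hp hc)

lemma intExp {r : ℝ} (hr : 0 < r) :
    IntegrableOn (fun z => r * Real.exp (-(r * z))) (Ioi 0) := by
  simpa [neg_mul, IntegrableOn] using (exp_neg_integrableOn_Ioi 0 hr).const_mul r

lemma integral_exp_one {r : ℝ} (hr : 0 < r) :
    ∫ z in Ioi (0:ℝ), r * Real.exp (-(r * z)) = 1 := by
  have h := integral_comp_mul_left_Ioi (fun u => Real.exp (-u)) 0 hr
  rw [mul_zero, integral_exp_neg_Ioi_zero, smul_eq_mul, mul_one] at h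
  rw [integral_const_mul, h, mul_inv_cancel₀ hr.ne']

end Stmt7Aux

open Set Filter Topology Stmt7Aux

/-- Average channel capacity per secondary stream in the massive MIMO regime:
for `Z` exponential with mean `Ez` and constants `a, pp, N0 > 0`,
`𝔼[log₂(1 + a/(pp Z + N0))]` has the stated closed form in terms of `E₁`. -/
theorem stmt_7 {Ω : Type*} [MeasureSpace Ω] [IsProbabilityMeasure (ℙ : Measure Ω)]
    (Z : Ω → ℝ) (Ez a pp N0 : ℝ) (hEz : 0 < Ez) (ha : 0 < a) (hpp : 0 < pp) (hN0 : 0 < N0)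
    (hZd : Measure.map Z ℙ = expMeasure (1 / Ez)) :
    ∫ ω, Real.logb 2 (1 + a / (pp * Z ω + N0)) ∂ℙ
      = Real.logb 2 (1 + a / N0)
        - Real.exp (N0 / (pp * Ez)) / Real.log 2 *
          (expIntegralE1 (N0 / (pp * Ez))
            - Real.exp (a / (pp * Ez)) * expIntegralE1 ((a + N0) / (pp * Ez))) := by
  set ρ : ℝ := 1 / Ez with hρ
  have hρ0 : 0 < ρ := by positivity
  set f : ℝ → ℝ := fun x => Real.logb 2 (1 + a / (pp * x + N0)) with hf
  have hfm : Measurable f :=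
    (Real.measurable_log.comp
      ((measurable_const.div ((measurable_id.const_mul pp).add_const N0)).const_add 1)).div_const _
  -- Step 1: transfer to the exponential measure
  have hZm : AEMeasurable Z ℙ := by
    apply aemeasurable_of_map_neZero
    rw [hZd]
    haveI := isProbabilityMeasure_expMeasure hρ0
    infer_instance
  have step1 : ∫ ω, f (Z ω) ∂ℙ = ∫ x, f x ∂(expMeasure ρ) := by
    rw [← hZd, integral_map hZm hfm.aestronglyMeasurable]
  -- Step 2: unfold the density
  have hmeas : expMeasure ρ
      = volume.withDensity (fun x => ((Real.toNNReal (exponentialPDFReal ρ x) : NNReal) : ENNReal)) := rfl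
  have step2 : ∫ x, f x ∂(expMeasure ρ) = ∫ x, exponentialPDFReal ρ x * f x := by
    rw [hmeas, integral_withDensity_eq_integral_smul
      ((measurable_exponentialPDFReal ρ).real_toNNReal) f]
    congr 1
    ext x
    rw [NNReal.smul_def, Real.coe_toNNReal _ (exponentialPDFReal_nonneg hρ0 x), smul_eq_mul]
  -- Step 3: restrict to `Ioi 0`
  have hind : (fun x => exponentialPDFReal ρ x * f x)
      = (Ici (0:ℝ)).indicator (fun x => ρ * Real.exp (-(ρ * x)) * f x) := by
    ext x
    by_cases hx : (0:ℝ) ≤ x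
    · rw [Set.indicator_of_mem (show x ∈ Ici (0:ℝ) from hx)]
      congr 1
      simp [exponentialPDFReal, gammaPDFReal, hx, Real.Gamma_one]
    · rw [Set.indicator_of_notMem (show x ∉ Ici (0:ℝ) from hx)]
      have : exponentialPDFReal ρ x = 0 := by simp [exponentialPDFReal, gammaPDFReal, hx]
      rw [this, zero_mul]
  have step3 : ∫ x, exponentialPDFReal ρ x * f x
      = ∫ x in Ioi (0:ℝ), ρ * Real.exp (-(ρ * x)) * f x := by
    rw [hind, integral_indicator measurableSet_Ici, integral_Ici_eq_integral_Ioi]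
  -- Step 4: split the logarithm and integrate
  have hAN0 : 0 < a + N0 := by positivity
  have I1 := intOn2 hρ0 hpp hAN0
  have I2 := intOn2 hρ0 hpp hN0
  have I3 : IntegrableOn
      (fun x => (Real.log (a + N0) - Real.log N0) * (ρ * Real.exp (-(ρ * x)))) (Ioi 0) :=
    (intExp hρ0).const_mul (Real.log (a + N0) - Real.log N0)
  have I12 : IntegrableOn
      (fun x => ρ * Real.exp (-(ρ * x)) * (Real.log ((a + N0) + pp * x) - Real.log (a + N0))
        - ρ * Real.exp (-(ρ * x)) * (Real.log (N0 + pp * x) - Real.log N0)) (Ioi 0) :=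
    I1.sub I2
  have hpt : ∀ x ∈ Ioi (0:ℝ), ρ * Real.exp (-(ρ * x)) * f x
      = (Real.log 2)⁻¹ *
        (ρ * Real.exp (-(ρ * x)) * (Real.log ((a + N0) + pp * x) - Real.log (a + N0))
          - ρ * Real.exp (-(ρ * x)) * (Real.log (N0 + pp * x) - Real.log N0)
          + (Real.log (a + N0) - Real.log N0) * (ρ * Real.exp (-(ρ * x)))) := by
    intro x hx
    have hx0 : (0:ℝ) < x := hx
    have hd : 0 < pp * x + N0 := by positivity
    have harg : 1 + a / (pp * x + N0) = ((a + N0) + pp * x) / (N0 + pp * x) := by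
      field_simp
      ring
    have hfx : f x = (Real.log ((a + N0) + pp * x) - Real.log (N0 + pp * x)) / Real.log 2 := by
      rw [hf]
      simp only
      rw [harg, Real.logb, Real.log_div (by positivity) (by positivity)]
    rw [hfx]
    ring
  have step4 : ∫ x in Ioi (0:ℝ), ρ * Real.exp (-(ρ * x)) * f x
      = (Real.log 2)⁻¹ *
        (Real.exp (ρ * (a + N0) / pp) * expIntegralE1 (ρ * (a + N0) / pp)
          - Real.exp (ρ * N0 / pp) * expIntegralE1 (ρ * N0 / pp)
          + (Real.log (a + N0) - Real.log N0)) := by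
    rw [setIntegral_congr_fun measurableSet_Ioi hpt, integral_const_mul,
      integral_add I12 I3, integral_sub I1 I2, integral_const_mul,
      integral_exp_one hρ0, mul_one, log_integral hρ0 hpp hAN0, log_integral hρ0 hpp hN0]
  -- Final arithmetic
  have e1 : ρ * N0 / pp = N0 / (pp * Ez) := by
    rw [hρ, mul_comm pp Ez, one_div_mul_eq_div, div_div]
  have e2 : ρ * (a + N0) / pp = (a + N0) / (pp * Ez) := by
    rw [hρ, mul_comm pp Ez, one_div_mul_eq_div, div_div]
  have hlogb : Real.logb 2 (1 + a / N0)
      = (Real.log (a + N0) - Real.log N0) / Real.log 2 := by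
    rw [show 1 + a / N0 = (a + N0) / N0 from by field_simp; ring, Real.logb,
      Real.log_div (by positivity) hN0.ne']
  have hexpadd : Real.exp ((a + N0) / (pp * Ez))
      = Real.exp (N0 / (pp * Ez)) * Real.exp (a / (pp * Ez)) := by
    have hdd : N0 / (pp * Ez) + a / (pp * Ez) = (a + N0) / (pp * Ez) := by
      rw [← add_div, add_comm N0 a]
    rw [← Real.exp_add, hdd]
  have hl2 : Real.log 2 ≠ 0 := (Real.log_pos one_lt_two).ne'
  calc ∫ ω, Real.logb 2 (1 + a / (pp * Z ω + N0)) ∂ℙ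
      = ∫ ω, f (Z ω) ∂ℙ := rfl
    _ = ∫ x, f x ∂(expMeasure ρ) := step1
    _ = ∫ x, exponentialPDFReal ρ x * f x := step2
    _ = ∫ x in Ioi (0:ℝ), ρ * Real.exp (-(ρ * x)) * f x := step3
    _ = (Real.log 2)⁻¹ *
        (Real.exp (ρ * (a + N0) / pp) * expIntegralE1 (ρ * (a + N0) / pp)
          - Real.exp (ρ * N0 / pp) * expIntegralE1 (ρ * N0 / pp)
          + (Real.log (a + N0) - Real.log N0)) := step4
    _ = Real.logb 2 (1 + a / N0)
        - Real.exp (N0 / (pp * Ez)) / Real.log 2 *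
          (expIntegralE1 (N0 / (pp * Ez))
            - Real.exp (a / (pp * Ez)) * expIntegralE1 ((a + N0) / (pp * Ez))) := by
        rw [e1, e2, hlogb, hexpadd]
        field_simp
        ring
end
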